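/- There exists an absolute constant c > 0 with the following property. Let d, n, m, k ≥ 1 be integers, R > 0, δ ∈ (0,1), α ≥ 1, let x_1,…,x_n lie in the closed ball B(0,R) ⊂ ℝ^d, let U ∈ [0,1]^{n×k}, and fix j ∈ [k]. Set Y = (1/n)·Σ_{i=1}^n U_{ij}^α and assume Y > √( (c/(2m))·log(2/δ) ). Let μ_j = (Σ_{i=1}^n U_{ij}^α x_i)/(Σ_{i=1}^n U_{ij}^α), and let I_1,…,I_m be independent random indices, each uniformly distributed on {1,…,n}. Then with probability at least 1 − δ, Σ_{p=1}^m U_{I_p j}^α > 0 and the estimator μ̂_j = (Σ_{p=1}^m U_{I_p j}^α x_{I_p})/(Σ_{p=1}^m U_{I_p j}^α) satisfies ‖μ_j − μ̂_j‖₂² ≤ (4R²/Y²)·√( (c/m)·log(2/δ) ). -/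

import Mathlib

open scoped BigOperators
open MeasureTheory ProbabilityTheory
open Real Set Finset


section Aux


lemma aux_sinh_le_mul_cosh {x : ℝ} (hx : 0 ≤ x) : Real.sinh x ≤ x * Real.cosh x := by
  have h : MonotoneOn (fun v => v * Real.cosh v - Real.sinh v) (Ici (0:ℝ)) := by
    apply monotoneOn_of_hasDerivWithinAt_nonneg (convex_Ici 0)
      (f' := fun v => v * Real.sinh v)
    · fun_prop
    · intro v hv
      have : HasDerivAt (fun v => v * Real.cosh v - Real.sinh v)
          (1 * Real.cosh v + v * Real.sinh v - Real.cosh v) v :=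
        ((hasDerivAt_id v).mul (Real.hasDerivAt_cosh v)).sub (Real.hasDerivAt_sinh v)
      have h2 : (1 : ℝ) * Real.cosh v + v * Real.sinh v - Real.cosh v = v * Real.sinh v := by ring
      rw [h2] at this
      exact this.hasDerivWithinAt
    · intro v hv
      rw [interior_Ici] at hv
      exact mul_nonneg (le_of_lt hv) (Real.sinh_nonneg_iff.mpr (le_of_lt hv))
  have := h (self_mem_Ici) hx hx
  simpa using this

lemma aux_mul_sinh_le {p q : ℝ} (hp : 0 ≤ p) (hpq : p ≤ q) :
    q * Real.sinh p ≤ p * Real.sinh q := by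
  have h : MonotoneOn (fun v => p * Real.sinh v - v * Real.sinh p) (Ici p) := by
    apply monotoneOn_of_hasDerivWithinAt_nonneg (convex_Ici p)
      (f' := fun v => p * Real.cosh v - Real.sinh p)
    · fun_prop
    · intro v hv
      have : HasDerivAt (fun v => p * Real.sinh v - v * Real.sinh p)
          (0 * Real.sinh v + p * Real.cosh v - 1 * Real.sinh p) v :=
        ((hasDerivAt_const v p).mul (Real.hasDerivAt_sinh v)).sub
          ((hasDerivAt_id v).mul_const (Real.sinh p))
      have h2 : 0 * Real.sinh v + p * Real.cosh v - 1 * Real.sinh p = p * Real.cosh v - Real.sinh p := by ring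
      rw [h2] at this
      exact this.hasDerivWithinAt
    · intro v hv
      rw [interior_Ici] at hv
      have h1 : Real.sinh p ≤ p * Real.cosh p := aux_sinh_le_mul_cosh hp
      have h2 : Real.cosh p ≤ Real.cosh v := by
        rw [Real.cosh_le_cosh]
        rw [abs_of_nonneg hp, abs_of_nonneg (hp.trans hv.le)]
        exact hv.le
      nlinarith
  have := h (self_mem_Ici) (by exact hpq) hpq
  simp only [sub_self] at this
  nlinarith [this]

lemma aux_convexOn_sinh : ConvexOn ℝ (Ici (0:ℝ)) Real.sinh := by
  apply convexOn_of_deriv2_nonneg (convex_Ici 0)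
  · fun_prop
  · exact Real.differentiable_sinh.differentiableOn
  · simp only [Real.deriv_sinh]
    exact Real.differentiable_cosh.differentiableOn
  · intro v hv
    rw [interior_Ici] at hv
    simp only [Function.iterate_succ, Function.iterate_zero, Function.comp_apply, id_eq,
      Real.deriv_sinh, Real.deriv_cosh]
    exact Real.sinh_nonneg_iff.mpr hv.le

lemma aux_key_ineq' {a b s : ℝ} (hb : 0 ≤ b) (hba : b ≤ a)
    (h1 : a - b ≤ s) (h2 : s ≤ a + b) :
    2*a*b*Real.cosh s ≤ 2*a*b*(Real.cosh a * Real.cosh b)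
      + (s^2 - a^2 - b^2) * (Real.sinh a * Real.sinh b) := by
  have ha : 0 ≤ a := hb.trans hba
  rcases eq_or_lt_of_le hb with hb0 | hb0
  · simp [← hb0]
  have ha0 : 0 < a := lt_of_lt_of_le hb0 hba
  set G : ℝ → ℝ := fun v => 2*a*b*(Real.cosh a * Real.cosh b)
      + (v^2 - a^2 - b^2) * (Real.sinh a * Real.sinh b) - 2*a*b*Real.cosh v with hG
  suffices hGs : 0 ≤ G s by simp only [hG] at hGs; linarith
  have hl0 : (0:ℝ) ≤ a - b := by linarith
  have hGl : G (a - b) = 0 := by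
    simp only [hG, Real.cosh_sub]; ring
  have hGr : G (a + b) = 0 := by
    simp only [hG, Real.cosh_add]; ring
  set G' : ℝ → ℝ := fun v => 2*v*(Real.sinh a * Real.sinh b) - 2*a*b*Real.sinh v with hG'
  have hderiv : ∀ v : ℝ, HasDerivAt G (G' v) v := by
    intro v
    have hc : HasDerivAt (fun x : ℝ => 2*a*b*Real.cosh x) (2*a*b*Real.sinh v) v :=
      (Real.hasDerivAt_cosh v).const_mul (2*a*b)
    have hpoly : HasDerivAt (fun v : ℝ => (v^2 - a^2 - b^2)) (2*v) v := by
      simpa using ((hasDerivAt_pow 2 v).sub_const (a^2)).sub_const (b^2)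
    have hq : HasDerivAt (fun v : ℝ => 2*a*b*(Real.cosh a * Real.cosh b)
        + (v^2 - a^2 - b^2) * (Real.sinh a * Real.sinh b))
        (0 + 2*v*(Real.sinh a * Real.sinh b)) v :=
      (hasDerivAt_const v _).add (hpoly.mul_const _)
    have := hq.sub hc
    rw [zero_add] at this
    exact this
  have hsab : 0 ≤ Real.sinh a * Real.sinh b :=
    mul_nonneg (Real.sinh_nonneg_iff.mpr ha) (Real.sinh_nonneg_iff.mpr hb)
  have hG'l : 0 ≤ G' (a - b) := by
    have h3 : a * Real.sinh (a-b) ≤ (a-b) * Real.sinh a := aux_mul_sinh_le hl0 (by linarith)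
    have h4 : b ≤ Real.sinh b := Real.self_le_sinh_iff.mpr hb
    have h5 : 0 ≤ (a-b) * Real.sinh a :=
      mul_nonneg hl0 (Real.sinh_nonneg_iff.mpr ha)
    simp only [hG']
    nlinarith
  by_contra hneg
  push_neg at hneg
  have hsl : a - b < s := by
    rcases eq_or_lt_of_le h1 with h | h
    · exfalso; rw [← h] at hneg; linarith
    · exact h
  have hsr : s < a + b := by
    rcases eq_or_lt_of_le h2 with h | h
    · exfalso; rw [h] at hneg; linarith
    · exact h
  obtain ⟨ξ₁, hξ₁mem, hξ₁⟩ := exists_hasDerivAt_eq_slope G G' hsl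
    (fun v _ => (hderiv v).continuousAt.continuousWithinAt) (fun v _ => hderiv v)
  obtain ⟨ξ₂, hξ₂mem, hξ₂⟩ := exists_hasDerivAt_eq_slope G G' hsr
    (fun v _ => (hderiv v).continuousAt.continuousWithinAt) (fun v _ => hderiv v)
  have hG1 : G' ξ₁ < 0 := by
    rw [hξ₁, hGl]
    apply div_neg_of_neg_of_pos <;> linarith
  have hG2 : 0 < G' ξ₂ := by
    rw [hξ₂, hGr]
    apply div_pos <;> linarith
  have hm1 := hξ₁mem.1
  have hm2 := hξ₁mem.2
  have hm3 := hξ₂mem.1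
  have hm4 := hξ₂mem.2
  have hlt : a - b < ξ₂ := by linarith
  have hne : ξ₂ - (a - b) ≠ 0 := by linarith
  set θ : ℝ := (ξ₂ - ξ₁) / (ξ₂ - (a - b)) with hθ
  have hθ0 : 0 ≤ θ := div_nonneg (by linarith) (by linarith)
  have hθ1' : 0 < 1 - θ := by
    have : θ < 1 := by
      rw [hθ, div_lt_one (by linarith)]
      linarith
    linarith
  have h6 : θ * (ξ₂ - (a - b)) = ξ₂ - ξ₁ := by
    rw [hθ]; field_simp
  have hcomb : θ * (a - b) + (1 - θ) * ξ₂ = ξ₁ := by linear_combination -h6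
  have hconv := aux_convexOn_sinh.2 (mem_Ici.mpr hl0)
    (mem_Ici.mpr (by linarith : (0:ℝ) ≤ ξ₂)) hθ0 hθ1'.le (by ring)
  simp only [smul_eq_mul, hcomb] at hconv
  have hab : (0:ℝ) ≤ 2*a*b := by positivity
  have hkey : θ * G' (a - b) + (1 - θ) * G' ξ₂ ≤ G' ξ₁ := by
    simp only [hG']
    have hmul := mul_le_mul_of_nonneg_left hconv hab
    nlinarith [hmul]
  nlinarith [mul_nonneg hθ0 hG'l, mul_pos hθ1' hG2]

lemma aux_key_ineq {a b s : ℝ} (ha : 0 ≤ a) (hb : 0 ≤ b)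
    (h1 : |a - b| ≤ s) (h2 : s ≤ a + b) :
    2*a*b*Real.cosh s ≤ 2*a*b*(Real.cosh a * Real.cosh b)
      + (s^2 - a^2 - b^2) * (Real.sinh a * Real.sinh b) := by
  rcases le_total b a with h | h
  · exact aux_key_ineq' hb h (by rwa [abs_of_nonneg (by linarith)] at h1) h2
  · have h1' : b - a ≤ s := by rwa [abs_of_nonpos (by linarith), neg_sub] at h1
    have key := aux_key_ineq' ha h h1' (by linarith)
    nlinarith [key]

variable {E : Type*} [NormedAddCommGroup E] [InnerProductSpace ℝ E]

local notation "⟪" x ", " y "⟫" => @inner ℝ _ _ x y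


lemma aux_step {n : ℕ} (f : Fin n → E) (K lam : ℝ) (hK : 0 < K) (hlam : 0 ≤ lam)
    (hf : ∀ i, ‖f i‖ ≤ K) (hsum : ∑ i, f i = 0) (u : E) :
    ∑ i, Real.cosh (lam * ‖u + f i‖) ≤ n * (Real.cosh (lam * ‖u‖) * Real.cosh (lam * K)) := by
  rcases eq_or_lt_of_le hlam with h0 | hlam0
  · simp [← h0]
  rcases eq_or_ne u 0 with hu | hu
  · subst hu
    have : ∀ i, Real.cosh (lam * ‖(0:E) + f i‖) ≤ Real.cosh (lam * K) := by
      intro i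
      rw [Real.cosh_le_cosh]
      rw [abs_of_nonneg (by positivity), abs_of_nonneg (by positivity)]
      simpa using mul_le_mul_of_nonneg_left (by simpa using hf i) hlam
    calc ∑ i, Real.cosh (lam * ‖(0:E) + f i‖) ≤ ∑ _i : Fin n, Real.cosh (lam * K) :=
          Finset.sum_le_sum (fun i _ => this i)
      _ = n * Real.cosh (lam * K) := by simp [mul_comm]
      _ = n * (Real.cosh (lam * ‖(0:E)‖) * Real.cosh (lam * K)) := by simp
  -- main case
  have hun : 0 < ‖u‖ := norm_pos_iff.mpr hu
  set a := lam * ‖u‖ with hadef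
  set b := lam * K with hbdef
  have ha0 : 0 < a := by positivity
  have hb0 : 0 < b := by positivity
  have key : ∀ i, 2*a*b*Real.cosh (lam * ‖u + f i‖) ≤
      2*a*b*(Real.cosh a * Real.cosh b) + (2*lam^2) * ⟪u, f i⟫ * (Real.sinh a * Real.sinh b) := by
    intro i
    have hcs : |⟪u, f i⟫| ≤ ‖u‖ * K := by
      refine le_trans (abs_real_inner_le_norm u (f i)) ?_
      exact mul_le_mul_of_nonneg_left (hf i) (norm_nonneg u)
    set q : ℝ := ‖u‖^2 + 2*⟪u, f i⟫ + K^2 with hqdef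
    have hq0 : 0 ≤ q := by nlinarith [(abs_le.mp hcs).1, sq_nonneg (‖u‖ - K)]
    set s : ℝ := lam * Real.sqrt q with hsdef
    have hs2 : s^2 = lam^2 * q := by
      rw [hsdef, mul_pow, Real.sq_sqrt hq0]
    have hs0 : 0 ≤ s := by positivity
    have hstep1 : Real.cosh (lam * ‖u + f i‖) ≤ Real.cosh s := by
      rw [Real.cosh_le_cosh, abs_of_nonneg (by positivity), abs_of_nonneg hs0]
      apply mul_le_mul_of_nonneg_left _ hlam
      rw [hsdef] at *
      have hnorm : ‖u + f i‖^2 ≤ q := by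
        rw [norm_add_sq_real]
        have := hf i
        nlinarith [norm_nonneg (f i)]
      calc ‖u + f i‖ = Real.sqrt (‖u + f i‖^2) := by
            rw [Real.sqrt_sq (norm_nonneg _)]
        _ ≤ Real.sqrt q := Real.sqrt_le_sqrt hnorm
    have hrange1 : |a - b| ≤ s := by
      have h1 : (a - b)^2 ≤ s^2 := by
        rw [hs2, hadef, hbdef, hqdef]
        have := abs_le.mp hcs
        nlinarith [this.1, hlam0]
      calc |a - b| = Real.sqrt ((a-b)^2) := (Real.sqrt_sq_eq_abs _).symm
        _ ≤ Real.sqrt (s^2) := Real.sqrt_le_sqrt h1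
        _ = s := Real.sqrt_sq hs0
    have hrange2 : s ≤ a + b := by
      have h1 : s^2 ≤ (a + b)^2 := by
        rw [hs2, hadef, hbdef, hqdef]
        have := abs_le.mp hcs
        nlinarith [this.2, hlam0]
      calc s = Real.sqrt (s^2) := (Real.sqrt_sq hs0).symm
        _ ≤ Real.sqrt ((a+b)^2) := Real.sqrt_le_sqrt h1
        _ = a + b := Real.sqrt_sq (by positivity)
    have hkey := aux_key_ineq ha0.le hb0.le hrange1 hrange2
    have hexp : s^2 - a^2 - b^2 = 2*lam^2 * ⟪u, f i⟫ := by
      rw [hs2, hadef, hbdef, hqdef]; ring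
    rw [hexp] at hkey
    have hmono := mul_le_mul_of_nonneg_left hstep1 (by positivity : (0:ℝ) ≤ 2*a*b)
    linarith
  have hsum2 : ∑ i, (2*lam^2) * ⟪u, f i⟫ * (Real.sinh a * Real.sinh b) = 0 := by
    rw [← Finset.sum_mul, ← Finset.mul_sum, ← inner_sum, hsum, inner_zero_right]
    ring
  have htot : 2*a*b * ∑ i, Real.cosh (lam * ‖u + f i‖) ≤
      2*a*b * (n * (Real.cosh a * Real.cosh b)) := by
    calc 2*a*b * ∑ i, Real.cosh (lam * ‖u + f i‖)
        = ∑ i, 2*a*b*Real.cosh (lam * ‖u + f i‖) := by rw [Finset.mul_sum]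
      _ ≤ ∑ i, (2*a*b*(Real.cosh a * Real.cosh b)
            + (2*lam^2) * ⟪u, f i⟫ * (Real.sinh a * Real.sinh b)) :=
          Finset.sum_le_sum (fun i _ => key i)
      _ = n * (2*a*b*(Real.cosh a * Real.cosh b)) + 0 := by
          rw [Finset.sum_add_distrib, hsum2, Finset.sum_const]
          simp [nsmul_eq_mul]
      _ = 2*a*b * (n * (Real.cosh a * Real.cosh b)) := by ring
  have h2ab : (0:ℝ) < 2*a*b := by positivity
  exact le_of_mul_le_mul_left htot h2ab

lemma aux_sum_cosh_le {n : ℕ} (f : Fin n → E) (K lam : ℝ) (hK : 0 < K) (hlam : 0 ≤ lam)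
    (hf : ∀ i, ‖f i‖ ≤ K) (hsum : ∑ i, f i = 0) (m : ℕ) :
    ∑ σ : Fin m → Fin n, Real.cosh (lam * ‖∑ p, f (σ p)‖) ≤
      (n : ℝ)^m * Real.cosh (lam * K)^m := by
  induction m with
  | zero => simp
  | succ m ih =>
    rw [← (Fin.consEquiv (fun _ : Fin (m+1) => Fin n)).sum_comp, Fintype.sum_prod_type]
    have hterm : ∀ (i : Fin n) (σ : Fin m → Fin n),
        (∑ p : Fin (m+1), f ((Fin.consEquiv (fun _ : Fin (m+1) => Fin n)) (i, σ) p))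
          = (∑ p, f (σ p)) + f i := by
      intro i σ
      have hps : ((Fin.consEquiv (fun _ : Fin (m+1) => Fin n)) (i, σ)) = Fin.cons i σ := rfl
      rw [hps, Fin.sum_univ_succ]
      simp [add_comm]
    calc ∑ i : Fin n, ∑ σ : Fin m → Fin n,
          Real.cosh (lam * ‖∑ p : Fin (m+1), f ((Fin.consEquiv (fun _ : Fin (m+1) => Fin n)) (i, σ) p)‖)
        = ∑ σ : Fin m → Fin n, ∑ i : Fin n,
            Real.cosh (lam * ‖(∑ p, f (σ p)) + f i‖) := by
          rw [Finset.sum_comm]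
          congr 1; ext σ; congr 1; ext i
          rw [hterm i σ]
      _ ≤ ∑ σ : Fin m → Fin n,
            (n : ℝ) * (Real.cosh (lam * ‖∑ p, f (σ p)‖) * Real.cosh (lam * K)) :=
          Finset.sum_le_sum (fun σ _ => aux_step f K lam hK hlam hf hsum _)
      _ = (n : ℝ) * Real.cosh (lam * K) * ∑ σ : Fin m → Fin n,
            Real.cosh (lam * ‖∑ p, f (σ p)‖) := by
          rw [Finset.mul_sum]; congr 1; ext σ; ring
      _ ≤ (n : ℝ) * Real.cosh (lam * K) * ((n : ℝ)^m * Real.cosh (lam * K)^m) := by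
          apply mul_le_mul_of_nonneg_left ih
          positivity
      _ = (n : ℝ)^(m+1) * Real.cosh (lam * K)^(m+1) := by ring

lemma aux_card_bad_le {n : ℕ} (f : Fin n → E) (K : ℝ) (hK : 0 < K)
    (hf : ∀ i, ‖f i‖ ≤ K) (hsum : ∑ i, f i = 0) {m : ℕ} (hm : 1 ≤ m)
    {r : ℝ} (hr : 0 < r) :
    ((Finset.univ.filter fun σ : Fin m → Fin n => r ≤ ‖∑ p, f (σ p)‖).card : ℝ)
      ≤ 2 * Real.exp (- r^2 / (2 * m * K^2)) * (n : ℝ)^m := by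
  classical
  set lam : ℝ := r / (m * K^2) with hlam
  have hm0 : (0:ℝ) < m := by exact_mod_cast hm
  have hlam0 : 0 < lam := by positivity
  set B := Finset.univ.filter fun σ : Fin m → Fin n => r ≤ ‖∑ p, f (σ p)‖ with hB
  have hlb : (B.card : ℝ) * (Real.exp (lam * r) / 2) ≤
      ∑ σ : Fin m → Fin n, Real.cosh (lam * ‖∑ p, f (σ p)‖) := by
    have h1 : ∀ σ ∈ B, Real.exp (lam * r) / 2 ≤ Real.cosh (lam * ‖∑ p, f (σ p)‖) := by
      intro σ hσ
      rw [hB, Finset.mem_filter] at hσ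
      have h2 : lam * r ≤ lam * ‖∑ p, f (σ p)‖ :=
        mul_le_mul_of_nonneg_left hσ.2 hlam0.le
      calc Real.exp (lam * r) / 2 ≤ Real.exp (lam * ‖∑ p, f (σ p)‖) / 2 := by
            apply div_le_div_of_nonneg_right ?_ (by norm_num)
            · exact Real.exp_le_exp.mpr h2
        _ ≤ Real.cosh (lam * ‖∑ p, f (σ p)‖) := by
            rw [Real.cosh_eq]
            have := Real.exp_pos (-(lam * ‖∑ p, f (σ p)‖))
            linarith
    calc (B.card : ℝ) * (Real.exp (lam * r) / 2)
        = ∑ _σ ∈ B, Real.exp (lam * r) / 2 := by rw [Finset.sum_const]; simp [mul_comm]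
      _ ≤ ∑ σ ∈ B, Real.cosh (lam * ‖∑ p, f (σ p)‖) := Finset.sum_le_sum h1
      _ ≤ ∑ σ : Fin m → Fin n, Real.cosh (lam * ‖∑ p, f (σ p)‖) := by
          apply Finset.sum_le_sum_of_subset_of_nonneg (Finset.subset_univ B)
          intro σ _ _
          have := Real.one_le_cosh (lam * ‖∑ p, f (σ p)‖)
          linarith
  have hub := aux_sum_cosh_le f K lam hK hlam0.le hf hsum m
  have hcosh : Real.cosh (lam * K)^m ≤ Real.exp (m * (lam * K)^2 / 2) := by
    calc Real.cosh (lam * K)^m ≤ (Real.exp ((lam * K)^2 / 2))^m := by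
          apply pow_le_pow_left₀ (by positivity) (Real.cosh_le_exp_half_sq _)
      _ = Real.exp (m * (lam * K)^2 / 2) := by
          rw [← Real.exp_nat_mul]; ring_nf
  have hchain : (B.card : ℝ) * (Real.exp (lam * r) / 2) ≤
      (n:ℝ)^m * Real.exp (m * (lam * K)^2 / 2) := by
    refine le_trans hlb (le_trans hub ?_)
    apply mul_le_mul_of_nonneg_left hcosh (by positivity)
  have hexp : m * (lam * K)^2 / 2 - lam * r = - r^2 / (2 * m * K^2) := by
    rw [hlam]
    field_simp
    ring
  have hpos : (0:ℝ) < Real.exp (lam * r) / 2 := by positivity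
  have h2 : (B.card : ℝ) ≤ ((n:ℝ)^m * Real.exp (m * (lam * K)^2 / 2)) / (Real.exp (lam*r) / 2) :=
    (le_div_iff₀ hpos).mpr hchain
  have h3 : ((n:ℝ)^m * Real.exp (m * (lam * K)^2 / 2)) / (Real.exp (lam*r) / 2)
      = 2 * Real.exp (m * (lam * K)^2 / 2 - lam * r) * (n:ℝ)^m := by
    rw [Real.exp_sub]; field_simp
  rw [h3, hexp] at h2
  exact h2

lemma aux_prob_transfer {n m : ℕ} (hn : 1 ≤ n) {Ω : Type}
    [MeasurableSpace Ω] (P : Measure Ω) [IsProbabilityMeasure P]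
    (I : Fin m → Ω → Fin n)
    (hind : iIndepFun (m := fun _ => (⊤ : MeasurableSpace (Fin n))) I P)
    (hunif : ∀ (p : Fin m) (i : Fin n), P {ω | I p ω = i} = 1 / (n : ENNReal))
    (Good : (Fin m → Fin n) → Prop) [DecidablePred Good] {δ : ℝ} (hδ : 0 < δ)
    (hδ1 : δ ≤ 1)
    (hcard : ((Finset.univ.filter fun σ => ¬ Good σ).card : ℝ) ≤ δ * (n : ℝ)^m) :
    ENNReal.ofReal (1 - δ) ≤ P {ω | Good (fun p => I p ω)} := by
  classical
  set B := Finset.univ.filter fun σ : Fin m → Fin n => ¬ Good σ with hB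
  -- measure of each atom
  have hatom : ∀ σ : Fin m → Fin n,
      P (⋂ p ∈ (Finset.univ : Finset (Fin m)), I p ⁻¹' {σ p}) = (1 / (n:ENNReal))^m := by
    intro σ
    rw [hind.meas_biInter (fun p _ => ⟨{σ p}, trivial, rfl⟩)]
    · have hpre : ∀ p, P (I p ⁻¹' {σ p}) = 1 / (n:ENNReal) := fun p => hunif p (σ p)
      rw [Finset.prod_congr rfl (fun p _ => hpre p), Finset.prod_const,
        Finset.card_univ, Fintype.card_fin]
  -- complement covered
  have hsub : {ω | Good (fun p => I p ω)}ᶜ ⊆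
      ⋃ σ ∈ B, ⋂ p ∈ (Finset.univ : Finset (Fin m)), I p ⁻¹' {σ p} := by
    intro ω hω
    simp only [Set.mem_compl_iff, Set.mem_setOf_eq] at hω
    refine Set.mem_biUnion (?_ : (fun p => I p ω) ∈ B) ?_
    · rw [hB, Finset.mem_filter]
      exact ⟨Finset.mem_univ _, hω⟩
    · simp
  have hcompl : P {ω | Good (fun p => I p ω)}ᶜ ≤ ENNReal.ofReal δ := by
    calc P {ω | Good (fun p => I p ω)}ᶜ
        ≤ ∑ σ ∈ B, P (⋂ p ∈ (Finset.univ : Finset (Fin m)), I p ⁻¹' {σ p}) :=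
          le_trans (measure_mono hsub) (measure_biUnion_finset_le B _)
      _ = B.card * (1 / (n:ENNReal))^m := by
          rw [Finset.sum_congr rfl (fun σ _ => hatom σ), Finset.sum_const]
          simp [nsmul_eq_mul]
      _ ≤ ENNReal.ofReal δ := by
          have hn0 : (0:ℝ) < n := by exact_mod_cast hn
          have e1 : (1 / (n:ENNReal))^m = ENNReal.ofReal ((1/(n:ℝ))^m) := by
            rw [ENNReal.ofReal_pow (by positivity)]
            congr 1
            rw [ENNReal.ofReal_div_of_pos hn0]
            simp [ENNReal.ofReal_natCast]
          have e2 : (B.card : ENNReal) = ENNReal.ofReal (B.card : ℝ) := by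
            simp [ENNReal.ofReal_natCast]
          rw [e1, e2, ← ENNReal.ofReal_mul (by positivity)]
          apply ENNReal.ofReal_le_ofReal
          rw [one_div, inv_pow]
          rw [mul_inv_le_iff₀ (by positivity)]
          exact hcard
  have hunion : (1:ENNReal) ≤ P {ω | Good (fun p => I p ω)} + ENNReal.ofReal δ := by
    have h1 : (1:ENNReal) = P Set.univ := (measure_univ).symm
    rw [h1, ← Set.union_compl_self {ω | Good (fun p => I p ω)}]
    exact le_trans (measure_union_le _ _) (add_le_add le_rfl hcompl)
  have hsplit : ENNReal.ofReal (1 - δ) + ENNReal.ofReal δ = 1 := by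
    rw [← ENNReal.ofReal_add (by linarith) hδ.le]
    norm_num
  rw [← hsplit] at hunion
  exact (ENNReal.add_le_add_iff_right ENNReal.ofReal_ne_top).mp hunion

end Aux


set_option maxHeartbeats 1000000 in
/-- Lemma (estimate of a cluster mean via uniform sampling): there is an absolute
constant `c > 0` such that, sampling `m` indices uniformly with replacement, with
probability at least `1 - δ` the self-normalized estimator of the cluster center `μ_j`
has squared error at most `(4R²/Y²)·√((c/m)·log(2/δ))`. -/
theorem mean_estimate_uniform_sampling :
    ∃ c : ℝ, 0 < c ∧
      ∀ (d n m k : ℕ), 1 ≤ d → 1 ≤ n → 1 ≤ m → 1 ≤ k →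
      ∀ (R δ α : ℝ), 0 < R → δ ∈ Set.Ioo (0 : ℝ) 1 → 1 ≤ α →
      ∀ (x : Fin n → EuclideanSpace ℝ (Fin d)),
        (∀ i, x i ∈ Metric.closedBall (0 : EuclideanSpace ℝ (Fin d)) R) →
      ∀ (U : Fin n → Fin k → ℝ), (∀ i j, U i j ∈ Set.Icc (0 : ℝ) 1) →
      ∀ j : Fin k,
        Real.sqrt (c / (2 * m) * Real.log (2 / δ)) < (1 / n) * ∑ i, U i j ^ α →
      ∀ (Ω : Type) (_ : MeasurableSpace Ω) (P : Measure Ω),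
        IsProbabilityMeasure P →
      ∀ I : Fin m → Ω → Fin n,
        iIndepFun (m := fun _ => (⊤ : MeasurableSpace (Fin n))) I P →
        (∀ (p : Fin m) (i : Fin n), P {ω | I p ω = i} = 1 / (n : ENNReal)) →
      ENNReal.ofReal (1 - δ) ≤
        P {ω | 0 < ∑ p, U (I p ω) j ^ α ∧
          ‖((∑ i, U i j ^ α)⁻¹ • ∑ i, (U i j ^ α) • x i) -
            ((∑ p, U (I p ω) j ^ α)⁻¹ • ∑ p, (U (I p ω) j ^ α) • x (I p ω))‖ ^ 2 ≤
            4 * R ^ 2 / ((1 / n * ∑ i, U i j ^ α) ^ 2) *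
              Real.sqrt (c / m * Real.log (2 / δ))} := by
  classical
  refine ⟨64, by norm_num, ?_⟩
  intro d n m k hd hn hm hk R δ α hR hδ hα x hx U hU j hY Ω mΩ P hP I hind hunif
  obtain ⟨hδ0, hδ1⟩ := hδ
  set L : ℝ := Real.log (2 / δ) with hLdef
  have hL : 0 < L := Real.log_pos (by rw [lt_div_iff₀ hδ0]; linarith)
  have hm0 : (0:ℝ) < m := by exact_mod_cast hm
  have hn0 : (0:ℝ) < n := by exact_mod_cast hn
  set Y : ℝ := (1 / n) * ∑ i, U i j ^ α with hYdef
  have harg : 0 < 64 / (2 * m) * L := by positivity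
  have hY0 : 0 < Y := lt_trans (Real.sqrt_pos.mpr harg) hY
  have hYsq : 64 / (2 * m) * L < Y ^ 2 := (Real.sqrt_lt' hY0).mp hY
  have hmY2 : 32 * L < m * Y ^ 2 := by
    have h1 : 64 / (2 * m) * L = 32 * L / m := by ring
    rw [h1, div_lt_iff₀ hm0] at hYsq
    linarith
  have hw0 : ∀ i, 0 ≤ U i j ^ α := fun i => Real.rpow_nonneg (hU i j).1 α
  have hw1 : ∀ i, U i j ^ α ≤ 1 := fun i =>
    Real.rpow_le_one (hU i j).1 (hU i j).2 (le_trans zero_le_one hα)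
  have hY1 : Y ≤ 1 := by
    rw [hYdef]
    have h1 : ∑ i, U i j ^ α ≤ ∑ _i : Fin n, (1:ℝ) := Finset.sum_le_sum (fun i _ => hw1 i)
    rw [Finset.sum_const, Finset.card_univ, Fintype.card_fin, nsmul_eq_mul, mul_one] at h1
    calc (1 / (n:ℝ)) * ∑ i, U i j ^ α ≤ (1 / (n:ℝ)) * n := by
          apply mul_le_mul_of_nonneg_left h1 (by positivity)
      _ = 1 := by field_simp
  have hY2le : Y ^ 2 ≤ 1 := by nlinarith
  have hmL : 32 * L < m := by nlinarith
  have hS : ∑ i, U i j ^ α = n * Y := by rw [hYdef]; field_simp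
  have hS0 : 0 < ∑ i, U i j ^ α := by rw [hS]; positivity
  have hxR : ∀ i, ‖x i‖ ≤ R := by
    intro i
    have := hx i
    rwa [Metric.mem_closedBall, dist_zero_right] at this
  set μ : EuclideanSpace ℝ (Fin d) := (∑ i, U i j ^ α)⁻¹ • ∑ i, (U i j ^ α) • x i with hμdef
  have hμR : ‖μ‖ ≤ R := by
    rw [hμdef, norm_smul, norm_inv, Real.norm_eq_abs, abs_of_pos hS0]
    rw [inv_mul_le_iff₀ hS0]
    calc ‖∑ i, (U i j ^ α) • x i‖ ≤ ∑ i, ‖(U i j ^ α) • x i‖ := norm_sum_le _ _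
      _ ≤ ∑ i, (U i j ^ α) * R := by
          apply Finset.sum_le_sum
          intro i _
          rw [norm_smul, Real.norm_eq_abs, abs_of_nonneg (hw0 i)]
          exact mul_le_mul_of_nonneg_left (hxR i) (hw0 i)
      _ = (∑ i, U i j ^ α) * R := by rw [Finset.sum_mul]
  -- the two centered families
  set f1 : Fin n → ℝ := fun i => U i j ^ α - Y with hf1def
  have hf1app : ∀ i, f1 i = U i j ^ α - Y := fun _ => rfl
  have hf1sum : ∑ i, f1 i = 0 := by
    rw [Finset.sum_congr rfl (fun i _ => hf1app i), Finset.sum_sub_distrib, hS,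
      Finset.sum_const, Finset.card_univ, Fintype.card_fin, nsmul_eq_mul]
    ring
  have hf1K : ∀ i, ‖f1 i‖ ≤ 1 := by
    intro i
    rw [hf1app i, Real.norm_eq_abs, abs_le]
    constructor
    · linarith [hw0 i, hY1]
    · linarith [hw1 i, hY0]
  set f2 : Fin n → EuclideanSpace ℝ (Fin d) :=
    fun i => (U i j ^ α) • x i - (U i j ^ α) • μ with hf2def
  have hf2app : ∀ i, f2 i = (U i j ^ α) • x i - (U i j ^ α) • μ := fun _ => rfl
  have hf2sum : ∑ i, f2 i = 0 := by
    rw [Finset.sum_congr rfl (fun i _ => hf2app i), Finset.sum_sub_distrib,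
      ← Finset.sum_smul, hμdef, smul_smul,
      mul_inv_cancel₀ (ne_of_gt hS0), one_smul, sub_self]
  have hf2K : ∀ i, ‖f2 i‖ ≤ 2 * R := by
    intro i
    rw [hf2app i]
    calc ‖(U i j ^ α) • x i - (U i j ^ α) • μ‖
        ≤ ‖(U i j ^ α) • x i‖ + ‖(U i j ^ α) • μ‖ := norm_sub_le _ _
      _ ≤ 1 * R + 1 * R := by
          apply add_le_add <;> rw [norm_smul, Real.norm_eq_abs, abs_of_nonneg (hw0 i)] <;>
            apply mul_le_mul (hw1 i) (by first | exact hxR i | exact hμR)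
              (norm_nonneg _) zero_le_one
      _ = 2 * R := by ring
  set r1 : ℝ := m * Y / 2 with hr1def
  have hr1 : 0 < r1 := by rw [hr1def]; positivity
  set r2 : ℝ := R * Real.sqrt (m * Real.sqrt (64 * L * m)) with hr2def
  have hsq64 : 0 < Real.sqrt (64 * L * m) := Real.sqrt_pos.mpr (by positivity)
  have hr2 : 0 < r2 := by rw [hr2def]; positivity
  have hr2sq : r2 ^ 2 = R ^ 2 * (m * Real.sqrt (64 * L * m)) := by
    rw [hr2def, mul_pow, Real.sq_sqrt (by positivity)]
  have hsqrt_eq : Real.sqrt (64 * L * m) = Real.sqrt (64 / m * L) * m := by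
    rw [show 64 * L * (m:ℝ) = (64 / m * L) * m^2 by field_simp]
    rw [Real.sqrt_mul (by positivity), Real.sqrt_sq hm0.le]
  -- the good-configuration predicate
  set Good : (Fin m → Fin n) → Prop := fun σ =>
    0 < ∑ p, U (σ p) j ^ α ∧
      ‖((∑ i, U i j ^ α)⁻¹ • ∑ i, (U i j ^ α) • x i) -
        ((∑ p, U (σ p) j ^ α)⁻¹ • ∑ p, (U (σ p) j ^ α) • x (σ p))‖ ^ 2 ≤
        4 * R ^ 2 / ((1 / n * ∑ i, U i j ^ α) ^ 2) *
          Real.sqrt (64 / m * Real.log (2 / δ)) with hGooddef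
  -- deterministic implication
  have hGoodimp : ∀ σ : Fin m → Fin n,
      |∑ p, f1 (σ p)| < r1 → ‖∑ p, f2 (σ p)‖ < r2 → Good σ := by
    intro σ h1 h2
    simp only [hGooddef]
    rw [← hYdef, ← hLdef, ← hμdef]
    set b : ℝ := ∑ p, U (σ p) j ^ α with hbdef
    have hb1 : ∑ p, f1 (σ p) = b - m * Y := by
      rw [Finset.sum_congr rfl (fun p _ => hf1app (σ p)), Finset.sum_sub_distrib,
        Finset.sum_const, Finset.card_univ, Fintype.card_fin, nsmul_eq_mul, hbdef]
    have hb : r1 < b := by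
      rw [hb1] at h1
      have h3 := (abs_lt.mp h1).1
      rw [hr1def] at *
      linarith
    have hb0 : 0 < b := lt_trans hr1 hb
    refine ⟨hb0, ?_⟩
    have hs2 : ∑ p, f2 (σ p) = (∑ p, (U (σ p) j ^ α) • x (σ p)) - b • μ := by
      rw [Finset.sum_congr rfl (fun p _ => hf2app (σ p)), Finset.sum_sub_distrib,
        ← Finset.sum_smul, ← hbdef]
    have hdiff : μ - (b⁻¹ • ∑ p, (U (σ p) j ^ α) • x (σ p)) = -(b⁻¹ • ∑ p, f2 (σ p)) := by
      rw [hs2, smul_sub, smul_smul, inv_mul_cancel₀ (ne_of_gt hb0), one_smul]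
      abel
    rw [hdiff, norm_neg, norm_smul, norm_inv, Real.norm_eq_abs, abs_of_pos hb0]
    have hbound : b⁻¹ * ‖∑ p, f2 (σ p)‖ ≤ r1⁻¹ * r2 := by
      apply mul_le_mul ?_ h2.le (norm_nonneg _) (by positivity)
      exact inv_anti₀ hr1 hb.le
    calc (b⁻¹ * ‖∑ p, f2 (σ p)‖) ^ 2 ≤ (r1⁻¹ * r2) ^ 2 := by
          apply pow_le_pow_left₀ (by positivity) hbound
      _ = 4 * R ^ 2 / (Y ^ 2) * Real.sqrt (64 / m * L) := by
          rw [mul_pow, hr2sq, hsqrt_eq, hr1def]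
          have hsY : Real.sqrt (64 / m * L) ≥ 0 := Real.sqrt_nonneg _
          field_simp
          ring
  -- counting the bad configurations
  have hexpL : Real.exp (-(4*L)) = (δ/2)^4 := by
    have h1 : Real.exp L = 2/δ := Real.exp_log (by positivity)
    have h2 : Real.exp (4*L) = (2/δ)^4 := by
      rw [show (4:ℝ)*L = L+(L+(L+L)) by ring, Real.exp_add, Real.exp_add, Real.exp_add, h1]
      ring
    rw [Real.exp_neg, h2, ← inv_pow, inv_div]
  have hcard : ((Finset.univ.filter fun σ : Fin m → Fin n => ¬ Good σ).card : ℝ)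
      ≤ δ * (n : ℝ)^m := by
    have hsubset : (Finset.univ.filter fun σ : Fin m → Fin n => ¬ Good σ) ⊆
        (Finset.univ.filter fun σ : Fin m → Fin n => r1 ≤ |∑ p, f1 (σ p)|) ∪
        (Finset.univ.filter fun σ : Fin m → Fin n => r2 ≤ ‖∑ p, f2 (σ p)‖) := by
      intro σ hσ
      rw [Finset.mem_filter] at hσ
      rw [Finset.mem_union, Finset.mem_filter, Finset.mem_filter]
      by_contra hcon
      push_neg at hcon
      obtain ⟨hc1, hc2⟩ := hcon
      exact hσ.2 (hGoodimp σ (hc1 (Finset.mem_univ _)) (hc2 (Finset.mem_univ _)))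
    have hB1 : ((Finset.univ.filter fun σ : Fin m → Fin n =>
        r1 ≤ |∑ p, f1 (σ p)|).card : ℝ) ≤ 2 * Real.exp (- r1^2 / (2 * m * 1^2)) * (n : ℝ)^m := by
      have := aux_card_bad_le (E := ℝ) f1 1 one_pos hf1K hf1sum hm hr1
      simpa [Real.norm_eq_abs] using this
    have hB2 : ((Finset.univ.filter fun σ : Fin m → Fin n =>
        r2 ≤ ‖∑ p, f2 (σ p)‖).card : ℝ) ≤
        2 * Real.exp (- r2^2 / (2 * m * (2*R)^2)) * (n : ℝ)^m :=
      aux_card_bad_le f2 (2*R) (by positivity) hf2K hf2sum hm hr2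
    have he1 : - r1^2 / (2 * m * 1^2) < -(4*L) := by
      rw [hr1def, div_lt_iff₀ (by positivity)]
      have h5 := mul_lt_mul_of_pos_left hmY2 (show (0:ℝ) < m/4 by positivity)
      linarith [h5]
    have he2 : - r2^2 / (2 * m * (2*R)^2) < -(4*L) := by
      rw [hr2sq, div_lt_iff₀ (by positivity)]
      have h64 : 32 * L < Real.sqrt (64 * L * m) := by
        have h1 : (32 * L)^2 < 64 * L * m := by nlinarith
        calc 32 * L = Real.sqrt ((32*L)^2) := (Real.sqrt_sq (by positivity)).symm
          _ < Real.sqrt (64 * L * m) := Real.sqrt_lt_sqrt (by positivity) h1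
      have h5 := mul_lt_mul_of_pos_left h64 (show (0:ℝ) < R^2 * m by positivity)
      have h6 : (4*L) * (2 * (m:ℝ) * (2*R)^2) < R^2 * ((m:ℝ) * Real.sqrt (64*L*(m:ℝ))) := by
        calc (4*L) * (2 * (m:ℝ) * (2*R)^2) = (R^2*(m:ℝ)) * (32*L) := by ring
          _ < (R^2*(m:ℝ)) * Real.sqrt (64*L*(m:ℝ)) := h5
          _ = R^2 * ((m:ℝ) * Real.sqrt (64*L*(m:ℝ))) := by ring
      linarith
    have hq : (δ/2)^4 ≤ δ/4 := by
      have h1 : δ^4 ≤ δ^1 := pow_le_pow_of_le_one hδ0.le hδ1.le (by norm_num)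
      rw [pow_one] at h1
      have h2 : (δ/2)^4 = δ^4/16 := by ring
      rw [h2]
      linarith
    have hfinal : ∀ e : ℝ, e < -(4*L) →
        2 * Real.exp e * (n:ℝ)^m ≤ (δ/2) * (n:ℝ)^m := by
      intro e he
      have h1 : Real.exp e ≤ δ/4 := by
        calc Real.exp e ≤ Real.exp (-(4*L)) := Real.exp_le_exp.mpr he.le
          _ = (δ/2)^4 := hexpL
          _ ≤ δ/4 := hq
      have h2 : 2 * Real.exp e ≤ δ/2 := by linarith
      apply mul_le_mul_of_nonneg_right h2 (by positivity)
    calc ((Finset.univ.filter fun σ : Fin m → Fin n => ¬ Good σ).card : ℝ)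
        ≤ (((Finset.univ.filter fun σ : Fin m → Fin n => r1 ≤ |∑ p, f1 (σ p)|) ∪
            (Finset.univ.filter fun σ : Fin m → Fin n => r2 ≤ ‖∑ p, f2 (σ p)‖)).card : ℝ) := by
          exact_mod_cast Finset.card_le_card hsubset
      _ ≤ (((Finset.univ.filter fun σ : Fin m → Fin n => r1 ≤ |∑ p, f1 (σ p)|).card : ℝ) +
            ((Finset.univ.filter fun σ : Fin m → Fin n => r2 ≤ ‖∑ p, f2 (σ p)‖).card : ℝ)) := by
          exact_mod_cast Finset.card_union_le _ _
      _ ≤ (δ/2) * (n:ℝ)^m + (δ/2) * (n:ℝ)^m := by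
          exact add_le_add (le_trans hB1 (hfinal _ he1)) (le_trans hB2 (hfinal _ he2))
      _ = δ * (n:ℝ)^m := by ring
  exact aux_prob_transfer hn P I hind hunif Good hδ0 hδ1.le hcard
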